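/- Let Γ ⊊ ℝⁿ be an open symmetric convex cone containing the positive orthant with Γ ≠ Γₙ. Then Γ' = {(x₁,…,x_{n−1}) : (x₁,…,x_{n−1},0) ∈ Γ} is a symmetric open convex cone in ℝ^{n−1} containing the positive orthant Γ_{n−1}, with Γ' ≠ ℝ^{n−1}, and moreover the closure satisfies cl(Γ) ∩ {xₙ = 0} = cl(Γ') (identifying {xₙ=0} with ℝ^{n−1}). -/

import Mathlib

open Finset

private lemma snoc_comb (n : ℕ) (a b : ℝ) (y z : Fin n → ℝ) :
    (Fin.snoc (a • y + b • z) 0 : Fin (n + 1) → ℝ) =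
      a • (Fin.snoc y 0 : Fin (n + 1) → ℝ) + b • (Fin.snoc z 0 : Fin (n + 1) → ℝ) := by
  funext i
  refine Fin.lastCases ?_ (fun j => ?_) i <;> simp

private lemma snoc_smul (n : ℕ) (t : ℝ) (y : Fin n → ℝ) :
    (Fin.snoc (t • y) 0 : Fin (n + 1) → ℝ) = t • (Fin.snoc y 0 : Fin (n + 1) → ℝ) := by
  funext i
  refine Fin.lastCases ?_ (fun j => ?_) i <;> simp

private lemma snoc_cont (n : ℕ) :
    Continuous (fun y : Fin n → ℝ => (Fin.snoc y 0 : Fin (n + 1) → ℝ)) := by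
  apply continuous_pi
  intro i
  refine Fin.lastCases ?_ (fun j => ?_) i
  · simpa only [Fin.snoc_last] using (continuous_const : Continuous fun _ : Fin n → ℝ => (0:ℝ))
  · simpa only [Fin.snoc_castSucc] using continuous_apply j

theorem cone_slice_properties
    (n : ℕ) (Γ : Set (Fin (n + 1) → ℝ))
    (hopen : IsOpen Γ)
    (hsymm : ∀ (π : Equiv.Perm (Fin (n + 1))), ∀ x ∈ Γ, (fun i => x (π i)) ∈ Γ)
    (hcone : ∀ t : ℝ, 0 < t → ∀ x ∈ Γ, t • x ∈ Γ)
    (hconv : Convex ℝ Γ)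
    (horthant : {x : Fin (n + 1) → ℝ | ∀ i, 0 < x i} ⊆ Γ)
    (hne : Γ ≠ Set.univ)
    (hneq : Γ ≠ {x : Fin (n + 1) → ℝ | ∀ i, 0 < x i}) :
    IsOpen {y : Fin n → ℝ | Fin.snoc y 0 ∈ Γ} ∧
    (∀ (π : Equiv.Perm (Fin n)), ∀ y ∈ {y : Fin n → ℝ | Fin.snoc y 0 ∈ Γ},
      (fun i => y (π i)) ∈ {y : Fin n → ℝ | Fin.snoc y 0 ∈ Γ}) ∧
    (∀ t : ℝ, 0 < t → ∀ y ∈ {y : Fin n → ℝ | Fin.snoc y 0 ∈ Γ},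
      t • y ∈ {y : Fin n → ℝ | Fin.snoc y 0 ∈ Γ}) ∧
    Convex ℝ {y : Fin n → ℝ | Fin.snoc y 0 ∈ Γ} ∧
    {y : Fin n → ℝ | ∀ i, 0 < y i} ⊆ {y : Fin n → ℝ | Fin.snoc y 0 ∈ Γ} ∧
    {y : Fin n → ℝ | Fin.snoc y 0 ∈ Γ} ≠ Set.univ ∧
    (∀ y : Fin n → ℝ, Fin.snoc y 0 ∈ closure Γ ↔
      y ∈ closure {y : Fin n → ℝ | Fin.snoc y 0 ∈ Γ}) := by
  -- closure under addition
  have hadd : ∀ a ∈ Γ, ∀ b ∈ Γ, a + b ∈ Γ := by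
    intro a ha b hb
    have h2 : (1/2 : ℝ) • a + (1/2 : ℝ) • b ∈ Γ :=
      hconv ha hb (by norm_num) (by norm_num) (by norm_num)
    have h3 := hcone 2 (by norm_num) _ h2
    have : (2:ℝ) • ((1/2 : ℝ) • a + (1/2 : ℝ) • b) = a + b := by
      rw [smul_add, smul_smul, smul_smul]; norm_num
    rwa [this] at h3
  -- a point of Γ with negative last coordinate
  have hzge : ∃ z ∈ Γ, z (Fin.last n) < 0 := by
    have hex : ∃ z ∈ Γ, ∃ j, z j ≤ 0 := by
      by_contra h
      push_neg at h
      exact hneq (Set.Subset.antisymm (fun x hx i => h x hx i) horthant)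
    obtain ⟨z, hz, j, hj⟩ := hex
    have hz' := hsymm (Equiv.swap j (Fin.last n)) z hz
    set z' : Fin (n+1) → ℝ := fun i => z (Equiv.swap j (Fin.last n) i) with hz'def
    have hlast : z' (Fin.last n) ≤ 0 := by
      simpa [hz'def, Equiv.swap_apply_right] using hj
    have hc : Continuous (fun t : ℝ => z' + t • (Pi.single (Fin.last n) (-1:ℝ) : Fin (n+1) → ℝ)) := by
      continuity
    have hmem : (fun t : ℝ => z' + t • (Pi.single (Fin.last n) (-1:ℝ) : Fin (n+1) → ℝ)) ⁻¹' Γ ∈ nhds (0:ℝ) := by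
      apply hc.continuousAt.preimage_mem_nhds
      apply hopen.mem_nhds
      simpa using hz'
    obtain ⟨ε, hε, hball⟩ := Metric.mem_nhds_iff.mp hmem
    refine ⟨z' + (ε/2) • (Pi.single (Fin.last n) (-1:ℝ) : Fin (n+1) → ℝ), hball ?_, ?_⟩
    · simp only [Metric.mem_ball, Real.dist_eq, sub_zero]
      rw [abs_of_pos (by linarith)]; linarith
    · simp only [Pi.add_apply, Pi.smul_apply, Pi.single_eq_same, smul_eq_mul]
      linarith
  obtain ⟨z, hz, hzlast⟩ := hzge
  -- key: positive orthant of Fin n maps into Γ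
  have hkey : ∀ y : Fin n → ℝ, (∀ i, 0 < y i) → (Fin.snoc y 0 : Fin (n+1) → ℝ) ∈ Γ := by
    intro y hy
    have hev : ∀ᶠ t in nhdsWithin 0 (Set.Ioi (0:ℝ)),
        t < 1 ∧ ∀ i : Fin n, t * z (Fin.castSucc i) < y i := by
      apply Filter.Eventually.and
      · exact eventually_nhdsWithin_of_eventually_nhds
          (Filter.tendsto_id.eventually_lt_const (by norm_num : (0:ℝ) < 1))
      · rw [Filter.eventually_all]
        intro i
        apply eventually_nhdsWithin_of_eventually_nhds
        have ht : Filter.Tendsto (fun t : ℝ => t * z (Fin.castSucc i)) (nhds 0) (nhds 0) := by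
          simpa using (continuous_mul_right (z (Fin.castSucc i))).tendsto (0:ℝ)
        exact ht.eventually_lt_const (hy i)
    obtain ⟨t, ⟨ht1, ht2⟩, ht0⟩ := (hev.and (eventually_mem_nhdsWithin)).exists
    rw [Set.mem_Ioi] at ht0
    set w : Fin (n+1) → ℝ := fun j => ((Fin.snoc y 0 : Fin (n+1) → ℝ) j - t * z j) / (1 - t) with hwdef
    have hw : ∀ j, 0 < w j := by
      intro j
      refine Fin.lastCases ?_ (fun i => ?_) j
      · simp only [hwdef, Fin.snoc_last]
        apply div_pos
        · nlinarith
        · linarith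
      · simp only [hwdef, Fin.snoc_castSucc]
        apply div_pos
        · linarith [ht2 i]
        · linarith
    have hcomb := hconv hz (horthant hw) ht0.le (by linarith : (0:ℝ) ≤ 1 - t) (by ring)
    have heq : (Fin.snoc y 0 : Fin (n+1) → ℝ) = t • z + (1 - t) • w := by
      funext j
      have hne1 : (1:ℝ) - t ≠ 0 := by linarith
      simp only [Pi.add_apply, Pi.smul_apply, smul_eq_mul, hwdef]
      field_simp
      ring
    rwa [heq]
  refine ⟨hopen.preimage (snoc_cont n), ?_, ?_, ?_, ?_, ?_, ?_⟩
  · -- symmetry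
    intro π y hy
    set σ : Equiv.Perm (Fin (n+1)) :=
      finSuccEquivLast.trans ((Equiv.optionCongr π).trans finSuccEquivLast.symm) with hσ
    have h1 := hsymm σ _ hy
    have heq : (fun i => (Fin.snoc y 0 : Fin (n+1) → ℝ) (σ i)) =
        (Fin.snoc (fun i => y (π i)) 0 : Fin (n+1) → ℝ) := by
      funext i
      refine Fin.lastCases ?_ (fun j => ?_) i <;>
        simp [hσ, finSuccEquivLast_castSucc, finSuccEquivLast_last]
    rw [heq] at h1
    exact h1
  · -- cone
    intro t ht y hy
    show (Fin.snoc (t • y) 0 : Fin (n+1) → ℝ) ∈ Γ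
    rw [snoc_smul]
    exact hcone t ht _ hy
  · -- convexity
    intro y₁ h₁ y₂ h₂ a b ha hb hab
    show (Fin.snoc (a • y₁ + b • y₂) 0 : Fin (n+1) → ℝ) ∈ Γ
    rw [snoc_comb]
    exact hconv h₁ h₂ ha hb hab
  · -- orthant inclusion
    intro y hy
    exact hkey y hy
  · -- slice ≠ univ
    intro hU
    apply hne
    ext x
    simp only [Set.mem_univ, iff_true]
    set t : ℝ := (|x (Fin.last n)| + 1) / (-z (Fin.last n)) with htdef
    have ht : 0 < t := div_pos (by positivity) (by linarith)
    have hzne : z (Fin.last n) ≠ 0 := ne_of_lt hzlast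
    have htz : t * z (Fin.last n) = -(|x (Fin.last n)| + 1) := by
      rw [htdef, div_mul_eq_mul_div, mul_div_assoc, div_neg, div_self hzne]
      ring
    set c : ℝ := x (Fin.last n) - t * z (Fin.last n) with hcdef
    have hc : 0 < c := by
      have h1 := neg_abs_le (x (Fin.last n))
      rw [hcdef, htz]; linarith
    set w : Fin (n+1) → ℝ := fun j => if j = Fin.last n then c else 1 with hwdef
    have hw : w ∈ Γ := by
      apply horthant
      intro j
      by_cases h : j = Fin.last n <;> simp [hwdef, h, hc]
    set v : Fin (n+1) → ℝ := x - t • z - w with hvdef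
    have hvlast : v (Fin.last n) = 0 := by
      simp [hvdef, hwdef, hcdef]
    have hv : v ∈ Γ := by
      have h1 : Fin.init v ∈ {y : Fin n → ℝ | Fin.snoc y 0 ∈ Γ} := hU.symm ▸ Set.mem_univ _
      have h2 : (Fin.snoc (Fin.init v) 0 : Fin (n+1) → ℝ) = v := by
        rw [← hvlast]
        exact Fin.snoc_init_self v
      rw [Set.mem_setOf_eq, h2] at h1
      exact h1
    have hx : x = v + (t • z + w) := by
      rw [hvdef]; abel
    rw [hx]
    exact hadd _ hv _ (hadd _ (hcone t ht z hz) _ hw)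
  · -- closure
    intro y
    constructor
    · intro h
      have hp : (Fin.snoc (fun _ => (1:ℝ)) 0 : Fin (n+1) → ℝ) ∈ Γ := hkey _ (fun _ => one_pos)
      have hmem : ∀ t : ℝ, 0 < t → t < 1 →
          (t • (fun _ => (1:ℝ)) + (1-t) • y) ∈ {y : Fin n → ℝ | Fin.snoc y 0 ∈ Γ} := by
        intro t ht ht1
        have h1 : t • (Fin.snoc (fun _ => (1:ℝ)) 0 : Fin (n+1) → ℝ) + (1-t) • (Fin.snoc y 0 : Fin (n+1) → ℝ) ∈ interior Γ :=
          hconv.combo_interior_closure_mem_interior (by rwa [hopen.interior_eq]) h ht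
            (by linarith) (by ring)
        rw [hopen.interior_eq] at h1
        show (Fin.snoc (t • (fun _ => (1:ℝ)) + (1-t) • y) 0 : Fin (n+1) → ℝ) ∈ Γ
        rwa [snoc_comb]
      refine mem_closure_of_tendsto (b := nhdsWithin 0 (Set.Ioi (0:ℝ)))
        (f := fun t : ℝ => t • (fun _ => (1:ℝ)) + (1-t) • y) ?_ ?_
      · have hcont2 : Continuous (fun t : ℝ => t • (fun _ => (1:ℝ) : Fin n → ℝ) + (1-t) • y) := by
          continuity
        have h0 := (hcont2.tendsto 0).mono_left
          (nhdsWithin_le_nhds (s := Set.Ioi (0:ℝ)))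
        simpa using h0
      · have h1 : ∀ᶠ t in nhdsWithin 0 (Set.Ioi (0:ℝ)), t < 1 :=
          eventually_nhdsWithin_of_eventually_nhds
            (Filter.tendsto_id.eventually_lt_const (by norm_num : (0:ℝ) < 1))
        filter_upwards [h1, eventually_mem_nhdsWithin] with t ht1 ht0
        exact hmem t ht0 ht1
    · intro h
      have hsub : closure {y : Fin n → ℝ | Fin.snoc y 0 ∈ Γ} ⊆
          (fun y : Fin n → ℝ => (Fin.snoc y 0 : Fin (n+1) → ℝ)) ⁻¹' closure Γ :=
        closure_minimal (fun y hy => subset_closure hy) (isClosed_closure.preimage (snoc_cont n))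
      exact hsub h
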